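/- Let Ω be a finite transitive G-set and g ∈ G with exactly two orbits on Ω. Suppose φ, ψ are congruences with no nontrivial common refinement such that ⟨g⟩ acts transitively on Ω/φ (of size a) and on Ω/ψ (of size b). Then gcd(a, b) ≥ 2, with equality if and only if |Ω| = ab (i.e., Ω ≅ Ω/φ × Ω/ψ). -/

import Mathlib

/-- If `f : ℤ → α` is surjective onto a finite type and "translation-invariant"
(equality of values is determined by the difference), then the fibre of `f 0`
is exactly the multiples of `Nat.card α`. -/
lemma key_period {α : Type*} [Finite α] (f : ℤ → α)
    (hf : Function.Surjective f)
    (hiff : ∀ m n : ℤ, f m = f n ↔ f (m - n) = f 0) :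
    ∀ n : ℤ, f n = f 0 ↔ (Nat.card α : ℤ) ∣ n := by
  classical
  have hsub : ∀ m n : ℤ, f m = f 0 → f n = f 0 → f (m - n) = f 0 := fun m n hm hn =>
    (hiff m n).1 (hm.trans hn.symm)
  have hadd : ∀ m n : ℤ, f m = f 0 → f n = f 0 → f (m + n) = f 0 := by
    intro m n hm hn
    have hneg : f (-n) = f 0 := by
      have := hsub 0 n rfl hn
      simpa using this
    have := hsub m (-n) hm hneg
    simpa [sub_neg_eq_add] using this
  -- a positive period exists
  obtain ⟨i, j, hij, hfij⟩ : ∃ i j : ℕ, i ≠ j ∧ f i = f j :=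
    Finite.exists_ne_map_eq_of_infinite (fun n : ℕ => f n)
  have hS : ∃ n : ℕ, 0 < n ∧ f (n : ℤ) = f 0 := by
    rcases lt_or_gt_of_ne hij with h | h
    · refine ⟨j - i, by omega, ?_⟩
      have := (hiff (j : ℤ) (i : ℤ)).1 hfij.symm
      have hc : ((j - i : ℕ) : ℤ) = (j : ℤ) - i := by push_cast; omega
      rwa [hc]
    · refine ⟨i - j, by omega, ?_⟩
      have := (hiff (i : ℤ) (j : ℤ)).1 hfij
      have hc : ((i - j : ℕ) : ℤ) = (i : ℤ) - j := by push_cast; omega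
      rwa [hc]
  set S : Set ℕ := {n : ℕ | 0 < n ∧ f (n : ℤ) = f 0} with hSdef
  have hSne : S.Nonempty := hS
  set d : ℕ := sInf S with hd
  have hdS : d ∈ S := Nat.sInf_mem hSne
  have hdpos : 0 < d := hdS.1
  have hdf : f (d : ℤ) = f 0 := hdS.2
  have hmul : ∀ q : ℤ, f ((d : ℤ) * q) = f 0 := by
    intro q
    induction q using Int.induction_on with
    | zero => simpa using (rfl : f 0 = f 0)
    | succ k ih =>
        have := hadd _ _ ih hdf
        rwa [show (d : ℤ) * k + d = d * (k + 1) by ring] at this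
    | pred k ih =>
        have hneg : f (-(d : ℤ)) = f 0 := by simpa using hsub 0 (d : ℤ) rfl hdf
        have := hadd _ _ ih hneg
        rwa [show (d : ℤ) * (-k) + -d = d * (-k - 1) by ring] at this
  have hdvd : ∀ n : ℤ, f n = f 0 ↔ (d : ℤ) ∣ n := by
    intro n
    constructor
    · intro hn
      have hr : f (n % (d : ℤ)) = f 0 := by
        have h1 := hsub n ((d : ℤ) * (n / (d : ℤ))) hn (hmul _)
        rwa [← Int.emod_def] at h1
      by_contra hnd
      have hrne : n % (d : ℤ) ≠ 0 := fun h => hnd (Int.dvd_of_emod_eq_zero h)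
      have hrpos : 0 < n % (d : ℤ) := lt_of_le_of_ne (Int.emod_nonneg n (by exact_mod_cast hdpos.ne')) (Ne.symm hrne)
      have hrlt : n % (d : ℤ) < d := Int.emod_lt_of_pos n (by exact_mod_cast hdpos)
      have hmem : (n % (d : ℤ)).toNat ∈ S := by
        constructor
        · omega
        · rwa [Int.toNat_of_nonneg hrpos.le]
      have := Nat.sInf_le hmem
      omega
    · rintro ⟨q, rfl⟩
      exact hmul q
  have hcard : Nat.card α = d := by
    have hbij : Function.Bijective (fun k : Fin d => f (k : ℤ)) := by
      constructor
      · intro k l hkl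
        have h1 : (d : ℤ) ∣ (k : ℤ) - l := (hdvd _).1 ((hiff _ _).1 hkl)
        have h2 : ((k : ℤ) - l) = 0 := by
          refine Int.eq_zero_of_abs_lt_dvd h1 ?_
          have hk := k.isLt
          have hl := l.isLt
          rw [abs_lt]
          omega
        have : (k : ℕ) = (l : ℕ) := by omega
        exact Fin.ext this
      · intro y
        obtain ⟨n, rfl⟩ := hf y
        have h1 : f n = f (n % (d : ℤ)) := by
          rw [hiff]
          have : n - n % (d : ℤ) = (d : ℤ) * (n / (d : ℤ)) := by
            rw [Int.emod_def]; ring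
          rw [this]; exact hmul _
        have hnn : 0 ≤ n % (d : ℤ) := Int.emod_nonneg n (by exact_mod_cast hdpos.ne')
        have hlt : n % (d : ℤ) < d := Int.emod_lt_of_pos n (by exact_mod_cast hdpos)
        refine ⟨⟨(n % (d : ℤ)).toNat, by omega⟩, ?_⟩
        simp only
        rw [Int.toNat_of_nonneg hnn]
        exact h1.symm
    have := Nat.card_eq_of_bijective _ hbij
    simpa using this.symm
  intro n
  rw [hcard]
  exact hdvd n

/-- Case 4: `g` has two orbits on the finite transitive `G`-set `Ω`; `φ, ψ` are
congruences with trivial meet on which `g` acts as a single cycle (of lengths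
`a` and `b`).  Then `gcd(a,b) ≥ 2`, with equality iff `|Ω| = ab`, i.e. iff
`Ω ≅ Ω/φ × Ω/ψ`. -/
theorem stmt14 {G Ω : Type*} [Group G] [MulAction G Ω] [Finite Ω]
    [MulAction.IsPretransitive G Ω] (g : G)
    (hg : Nat.card (Quotient (MulAction.orbitRel (Subgroup.zpowers g) Ω)) = 2)
    (φ ψ : Setoid Ω)
    (hφ : ∀ (σ : G) (x y : Ω), φ.r x y → φ.r (σ • x) (σ • y))
    (hψ : ∀ (σ : G) (x y : Ω), ψ.r x y → ψ.r (σ • x) (σ • y))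
    (hmeet : φ ⊓ ψ = ⊥)
    (h1φ : ∀ x y : Ω, ∃ n : ℤ, φ.r (g ^ n • x) y)
    (h1ψ : ∀ x y : Ω, ∃ n : ℤ, ψ.r (g ^ n • x) y)
    (a b : ℕ) (ha : a = Nat.card (Quotient φ)) (hb : b = Nat.card (Quotient ψ)) :
    2 ≤ Nat.gcd a b ∧
      (Nat.gcd a b = 2 ↔ Nat.card Ω = a * b) ∧
      (Nat.card Ω = a * b ↔
        Function.Bijective (fun x : Ω => (Quotient.mk φ x, Quotient.mk ψ x))) := by
  classical
  -- Ω is nonempty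
  have hne : Nonempty Ω := by
    have h2 : Nat.card (Quotient (MulAction.orbitRel (Subgroup.zpowers g) Ω)) ≠ 0 := by
      rw [hg]; norm_num
    obtain ⟨⟨q⟩, -⟩ := Nat.card_ne_zero.mp h2
    exact ⟨q.out⟩
  -- splitting of equality via the two congruences
  have hsplit : ∀ y z : Ω, y = z ↔ (φ.r y z ∧ ψ.r y z) := by
    intro y z
    constructor
    · rintro rfl; exact ⟨φ.refl y, ψ.refl y⟩
    · intro h
      have h2 : (φ ⊓ ψ) y z := Setoid.inf_iff_and.mpr h
      rw [hmeet] at h2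
      exact h2
  -- the combined map is injective
  have hinj : Function.Injective (fun x : Ω => (Quotient.mk φ x, Quotient.mk ψ x)) := by
    intro x y hxy
    simp only [Prod.mk.injEq] at hxy
    exact (hsplit x y).mpr ⟨Quotient.eq.mp hxy.1, Quotient.eq.mp hxy.2⟩
  -- moving lemma
  have hmove : ∀ (θ : Setoid Ω), (∀ (σ : G) (x y : Ω), θ.r x y → θ.r (σ • x) (σ • y)) →
      ∀ (x : Ω) (m n : ℤ), (θ.r (g ^ m • x) (g ^ n • x) ↔ θ.r (g ^ (m - n) • x) x) := by
    intro θ hθ x m n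
    constructor
    · intro h
      have h2 := hθ (g ^ (-n)) _ _ h
      rwa [smul_smul, smul_smul, ← zpow_add, ← zpow_add, neg_add_eq_sub, neg_add_cancel,
        zpow_zero, one_smul] at h2
    · intro h
      have h2 := hθ (g ^ n) _ _ h
      rwa [smul_smul, ← zpow_add, show n + (m - n) = m by ring] at h2
  -- every ⟨g⟩-orbit has cardinality lcm a b
  have horb : ∀ x : Ω, Nat.card (MulAction.orbit (Subgroup.zpowers g) x) = Nat.lcm a b := by
    intro x
    have hfφ : ∀ n : ℤ, φ.r (g ^ n • x) x ↔ (a : ℤ) ∣ n := by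
      have hk := key_period (fun n : ℤ => Quotient.mk φ (g ^ n • x))
        (by
          intro y
          obtain ⟨y', rfl⟩ := Quotient.exists_rep y
          obtain ⟨n, hn⟩ := h1φ x y'
          exact ⟨n, Quotient.sound hn⟩)
        (by
          intro m n
          simp only [Quotient.eq]
          rw [show ((g : G) ^ (0:ℤ) • x) = x by simp]
          exact hmove φ hφ x m n)
      intro n
      have h := hk n
      simp only [Quotient.eq] at h
      rw [show ((g : G) ^ (0:ℤ) • x) = x by simp] at h
      rw [h, ← ha]
    have hfψ : ∀ n : ℤ, ψ.r (g ^ n • x) x ↔ (b : ℤ) ∣ n := by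
      have hk := key_period (fun n : ℤ => Quotient.mk ψ (g ^ n • x))
        (by
          intro y
          obtain ⟨y', rfl⟩ := Quotient.exists_rep y
          obtain ⟨n, hn⟩ := h1ψ x y'
          exact ⟨n, Quotient.sound hn⟩)
        (by
          intro m n
          simp only [Quotient.eq]
          rw [show ((g : G) ^ (0:ℤ) • x) = x by simp]
          exact hmove ψ hψ x m n)
      intro n
      have h := hk n
      simp only [Quotient.eq] at h
      rw [show ((g : G) ^ (0:ℤ) • x) = x by simp] at h
      rw [h, ← hb]
    set c : ℕ := Nat.card (MulAction.orbit (Subgroup.zpowers g) x) with hc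
    have hfc : ∀ n : ℤ, g ^ n • x = x ↔ (c : ℤ) ∣ n := by
      have hmem : ∀ n : ℤ, g ^ n • x ∈ MulAction.orbit (Subgroup.zpowers g) x := by
        intro n
        exact ⟨⟨g ^ n, Subgroup.mem_zpowers_iff.mpr ⟨n, rfl⟩⟩, rfl⟩
      have hk := key_period (fun n : ℤ =>
          (⟨g ^ n • x, hmem n⟩ : MulAction.orbit (Subgroup.zpowers g) x))
        (by
          rintro ⟨y, hy⟩
          obtain ⟨⟨h, hh⟩, rfl⟩ := hy
          obtain ⟨k, hk⟩ := Subgroup.mem_zpowers_iff.mp hh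
          exact ⟨k, Subtype.ext (by simp [hk])⟩)
        (by
          intro m n
          simp only [Subtype.mk.injEq]
          rw [show ((g : G) ^ (0:ℤ) • x) = x by simp]
          constructor
          · intro h
            have h2 := congrArg (fun z => g ^ (-n) • z) h
            rwa [smul_smul, smul_smul, ← zpow_add, ← zpow_add, neg_add_eq_sub, neg_add_cancel,
              zpow_zero, one_smul] at h2
          · intro h
            have h2 := congrArg (fun z => g ^ n • z) h
            rwa [smul_smul, ← zpow_add, show n + (m - n) = m by ring] at h2)
      intro n
      have h := hk n
      simp only [Subtype.mk.injEq] at h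
      rw [show ((g : G) ^ (0:ℤ) • x) = x by simp] at h
      exact h
    -- combine
    have hcomb : ∀ n : ℤ, (c : ℤ) ∣ n ↔ ((a : ℤ) ∣ n ∧ (b : ℤ) ∣ n) := by
      intro n
      rw [← hfc, hsplit, hfφ, hfψ]
    have h1 : c ∣ Nat.lcm a b := by
      rw [← Int.natCast_dvd_natCast]
      exact (hcomb (Nat.lcm a b)).mpr
        ⟨Int.natCast_dvd_natCast.mpr (Nat.dvd_lcm_left a b),
         Int.natCast_dvd_natCast.mpr (Nat.dvd_lcm_right a b)⟩
    have h2 : Nat.lcm a b ∣ c := by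
      have := (hcomb c).mp dvd_rfl
      exact Nat.lcm_dvd (Int.natCast_dvd_natCast.mp this.1) (Int.natCast_dvd_natCast.mp this.2)
    exact Nat.dvd_antisymm h1 h2
  -- the cardinality of Ω
  have hΩ : Nat.card Ω = 2 * Nat.lcm a b := by
    have e := MulAction.selfEquivSigmaOrbits (Subgroup.zpowers g) Ω
    have := Fintype.ofFinite Ω
    have hQfin : Finite (MulAction.orbitRel.Quotient (Subgroup.zpowers g) Ω) := Quotient.finite _
    have := Fintype.ofFinite (MulAction.orbitRel.Quotient (Subgroup.zpowers g) Ω)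
    calc Nat.card Ω
        = Nat.card (Σ ω : MulAction.orbitRel.Quotient (Subgroup.zpowers g) Ω,
            MulAction.orbit (Subgroup.zpowers g) ω.out) := Nat.card_congr e
      _ = ∑ ω : MulAction.orbitRel.Quotient (Subgroup.zpowers g) Ω,
            Nat.card (MulAction.orbit (Subgroup.zpowers g) ω.out) := by
          rw [Nat.card_eq_fintype_card, Fintype.card_sigma]
          congr 1
          ext ω
          rw [Nat.card_eq_fintype_card]
      _ = ∑ _ω : MulAction.orbitRel.Quotient (Subgroup.zpowers g) Ω, Nat.lcm a b := by
          congr 1; ext ω; exact horb _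
      _ = Fintype.card (MulAction.orbitRel.Quotient (Subgroup.zpowers g) Ω) * Nat.lcm a b := by
          rw [Finset.sum_const, Finset.card_univ, smul_eq_mul]
      _ = 2 * Nat.lcm a b := by
          rw [← Nat.card_eq_fintype_card]
          exact congrArg (· * Nat.lcm a b) hg
  -- numerics
  have hfinφ : Finite (Quotient φ) := Quotient.finite _
  have hfinψ : Finite (Quotient ψ) := Quotient.finite _
  have hneφ : Nonempty (Quotient φ) := ⟨Quotient.mk φ hne.some⟩
  have hneψ : Nonempty (Quotient ψ) := ⟨Quotient.mk ψ hne.some⟩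
  have hapos : 0 < a := ha ▸ Nat.card_pos
  have hbpos : 0 < b := hb ▸ Nat.card_pos
  have hLpos : 0 < Nat.lcm a b := Nat.pos_of_ne_zero (Nat.lcm_ne_zero hapos.ne' hbpos.ne')
  have hgl : Nat.gcd a b * Nat.lcm a b = a * b := Nat.gcd_mul_lcm a b
  have hcard_prod : Nat.card (Quotient φ × Quotient ψ) = a * b := by
    rw [Nat.card_prod, ← ha, ← hb]
  have hle : Nat.card Ω ≤ a * b := by
    rw [← hcard_prod]
    exact Nat.card_le_card_of_injective _ hinj
  have hlast : Nat.card Ω = a * b ↔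
      Function.Bijective (fun x : Ω => (Quotient.mk φ x, Quotient.mk ψ x)) := by
    rw [Nat.bijective_iff_injective_and_card, hcard_prod]
    exact ⟨fun h => ⟨hinj, h⟩, fun h => h.2⟩
  have hgcd2 : 2 ≤ Nat.gcd a b := by
    by_contra hlt
    push_neg at hlt
    have hgcd0 : Nat.gcd a b ≠ 0 := by
      intro h0
      obtain ⟨h1, h2⟩ := Nat.gcd_eq_zero_iff.mp h0
      omega
    have h1 : Nat.gcd a b = 1 := by omega
    rw [h1, one_mul] at hgl
    rw [hΩ] at hle
    omega
  refine ⟨hgcd2, ?_, hlast⟩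
  constructor
  · intro h
    rw [hΩ, ← hgl, h]
  · intro h
    rw [hΩ, ← hgl] at h
    have := Nat.eq_of_mul_eq_mul_right hLpos h
    omega
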